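/- Let n ≥ 4 and 1 ≤ k < n − 1 with k dividing n − 1, and let f(h) = h^n + h^{k+1}. Then the set of pairs (a, b) ∈ ℂ* × ℂ with f(ah + b) = a f(h) + b is exactly {(a, 0) : a^k = 1}, a cyclic group of order k. -/

import Mathlib

open Polynomial

lemma coeff_aux (a b : ℂ) (m j : ℕ) :
    ((C a * X + C b) ^ m).coeff j = a ^ j * b ^ (m - j) * m.choose j := by
  rw [add_pow, finset_sum_coeff]
  have : ∀ i ∈ Finset.range (m + 1),
      ((C a * X) ^ i * C b ^ (m - i) * (m.choose i : ℂ[X])).coeff j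
        = if j = i then a ^ i * b ^ (m - i) * (m.choose i : ℂ) else 0 := by
    intro i _
    have : (C a * X) ^ i * C b ^ (m - i) * (m.choose i : ℂ[X])
        = C (a ^ i * b ^ (m - i) * (m.choose i : ℂ)) * X ^ i := by
      rw [mul_pow, ← C_pow, ← C_eq_natCast, ← C_pow]
      rw [C_mul, C_mul]
      ring
    rw [this, coeff_C_mul, coeff_X_pow]
    split <;> simp
  rw [Finset.sum_congr rfl this, Finset.sum_ite_eq (Finset.range (m + 1)) j]
  by_cases h : j ≤ m
  · simp [Finset.mem_range, Nat.lt_succ_of_le h]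
  · have : m.choose j = 0 := Nat.choose_eq_zero_of_lt (by omega)
    simp [Finset.mem_range, h, this]

theorem affine_symmetries_binomial (n k : ℕ) (hn : 4 ≤ n) (hk1 : 1 ≤ k)
    (hk2 : k < n - 1) (hdvd : k ∣ n - 1) :
    {p : ℂ × ℂ | p.1 ≠ 0 ∧ (X ^ n + X ^ (k + 1) : ℂ[X]).comp (C p.1 * X + C p.2)
        = C p.1 * (X ^ n + X ^ (k + 1)) + C p.2}
      = {p : ℂ × ℂ | p.1 ^ k = 1 ∧ p.2 = 0} ∧
    (∀ p ∈ {p : ℂ × ℂ | p.1 ≠ 0 ∧ (X ^ n + X ^ (k + 1) : ℂ[X]).comp (C p.1 * X + C p.2)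
        = C p.1 * (X ^ n + X ^ (k + 1)) + C p.2},
      ∀ q ∈ {p : ℂ × ℂ | p.1 ≠ 0 ∧ (X ^ n + X ^ (k + 1) : ℂ[X]).comp (C p.1 * X + C p.2)
        = C p.1 * (X ^ n + X ^ (k + 1)) + C p.2},
      (p.1 * q.1, p.1 * q.2 + p.2) ∈ {p : ℂ × ℂ | p.1 ≠ 0 ∧
        (X ^ n + X ^ (k + 1) : ℂ[X]).comp (C p.1 * X + C p.2)
          = C p.1 * (X ^ n + X ^ (k + 1)) + C p.2}) ∧
    (∃ g ∈ {p : ℂ × ℂ | p.1 ≠ 0 ∧ (X ^ n + X ^ (k + 1) : ℂ[X]).comp (C p.1 * X + C p.2)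
        = C p.1 * (X ^ n + X ^ (k + 1)) + C p.2},
      ∀ p ∈ {p : ℂ × ℂ | p.1 ≠ 0 ∧ (X ^ n + X ^ (k + 1) : ℂ[X]).comp (C p.1 * X + C p.2)
        = C p.1 * (X ^ n + X ^ (k + 1)) + C p.2}, ∃ j : ℕ, p = (g.1 ^ j, 0)) ∧
    {p : ℂ × ℂ | p.1 ≠ 0 ∧ (X ^ n + X ^ (k + 1) : ℂ[X]).comp (C p.1 * X + C p.2)
        = C p.1 * (X ^ n + X ^ (k + 1)) + C p.2}.ncard = k := by
  -- arithmetic facts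
  obtain ⟨m, hm⟩ := hdvd
  have hm2 : 2 ≤ m := by
    rcases Nat.lt_or_ge m 2 with h | h
    · interval_cases m <;> omega
    · exact h
  have h2k : 2 * k ≤ n - 1 := by
    calc 2 * k ≤ m * k := Nat.mul_le_mul_right k hm2
    _ = n - 1 := by rw [mul_comm]; omega
  have hkn : k + 1 < n - 1 := by omega
  -- the key set equality
  have hset : {p : ℂ × ℂ | p.1 ≠ 0 ∧
      (X ^ n + X ^ (k + 1) : ℂ[X]).comp (C p.1 * X + C p.2)
        = C p.1 * (X ^ n + X ^ (k + 1)) + C p.2}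
      = {p : ℂ × ℂ | p.1 ^ k = 1 ∧ p.2 = 0} := by
    ext ⟨a, b⟩
    simp only [Set.mem_setOf_eq]
    constructor
    · rintro ⟨ha, heq⟩
      rw [add_comp, X_pow_comp, X_pow_comp] at heq
      -- coefficient at n - 1 gives b = 0
      have hb : b = 0 := by
        have h1 := congrArg (fun q => q.coeff (n - 1)) heq
        simp only [coeff_add, coeff_aux, coeff_C_mul, coeff_X_pow, coeff_C] at h1
        rw [show n - (n - 1) = 1 by omega] at h1
        rw [show n.choose (n - 1) = n by
          rw [show n - 1 = n - 1 from rfl, Nat.choose_symm (by omega), Nat.choose_one_right]] at h1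
        rw [Nat.choose_eq_zero_of_lt (by omega : n - 1 > k + 1)] at h1
        rw [if_neg (by omega : ¬ n - 1 = n), if_neg (by omega : ¬ n - 1 = k + 1),
          if_neg (by omega : ¬ n - 1 = 0)] at h1
        simp only [pow_one, Nat.cast_zero, mul_zero, add_zero, mul_zero, add_zero] at h1
        have hnz : (n : ℂ) ≠ 0 := Nat.cast_ne_zero.mpr (by omega)
        have := mul_eq_zero.mp h1
        rcases this with h | h
        · rcases mul_eq_zero.mp h with h | h
          · exact absurd h (pow_ne_zero _ ha)
          · exact h
        · exact absurd h hnz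
      subst hb
      -- coefficient at k + 1 gives a ^ (k+1) = a
      have hak : a ^ (k + 1) = a := by
        have h2 := congrArg (fun q => q.coeff (k + 1)) heq
        simp only [coeff_add, coeff_aux, coeff_C_mul, coeff_X_pow, coeff_C] at h2
        rw [zero_pow (show n - (k + 1) ≠ 0 by omega)] at h2
        rw [Nat.sub_self, pow_zero, Nat.choose_self] at h2
        simpa [if_neg (show ¬ k + 1 = n by omega)] using h2
      constructor
      · have : a * a ^ k = a * 1 := by
          rw [mul_one, ← pow_succ']; exact hak
        exact mul_left_cancel₀ ha this
      · rfl
    · rintro ⟨hak, hb⟩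
      subst hb
      have ha : a ≠ 0 := by
        intro h; rw [h, zero_pow (by omega : k ≠ 0)] at hak; exact zero_ne_one hak
      refine ⟨ha, ?_⟩
      have hak1 : a ^ (k + 1) = a := by rw [pow_succ', hak, mul_one]
      have han : a ^ n = a := by
        have : a ^ n = (a ^ k) ^ m * a := by
          rw [← pow_mul, ← hm, ← pow_succ]; congr 1; omega
        rw [this, hak, one_pow, one_mul]
      rw [add_comp, X_pow_comp, X_pow_comp, C_0, add_zero, add_zero, mul_pow, mul_pow,
        ← C_pow, ← C_pow, han, hak1, mul_add]
  refine ⟨hset, ?_, ?_, ?_⟩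
  · -- closure
    intro p hp q hq
    rw [hset] at hp hq ⊢
    obtain ⟨hp1, hp2⟩ := hp
    obtain ⟨hq1, hq2⟩ := hq
    exact ⟨by rw [mul_pow, hp1, hq1, one_mul], by rw [hq2, hp2, mul_zero, add_zero]⟩
  · -- generator
    have hkpos : (k : ℕ) ≠ 0 := by omega
    haveI : NeZero k := ⟨hkpos⟩
    have hζ : IsPrimitiveRoot (Complex.exp (2 * Real.pi * Complex.I / k)) k :=
      Complex.isPrimitiveRoot_exp k hkpos
    refine ⟨(Complex.exp (2 * Real.pi * Complex.I / k), 0), ?_, ?_⟩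
    · rw [hset]; exact ⟨hζ.pow_eq_one, rfl⟩
    · intro p hp
      rw [hset] at hp
      obtain ⟨i, _, hi⟩ := hζ.eq_pow_of_pow_eq_one hp.1
      exact ⟨i, by rw [Prod.ext_iff]; exact ⟨hi.symm, hp.2⟩⟩
  · -- cardinality
    rw [hset]
    have hkpos : k ≠ 0 := by omega
    have hζ : IsPrimitiveRoot (Complex.exp (2 * Real.pi * Complex.I / k)) k :=
      Complex.isPrimitiveRoot_exp k hkpos
    have himg : {p : ℂ × ℂ | p.1 ^ k = 1 ∧ p.2 = 0}
        = (fun a : ℂ => (a, (0 : ℂ))) '' ↑(nthRootsFinset k (1 : ℂ)) := by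
      ext ⟨a, b⟩
      simp only [Set.mem_setOf_eq, Set.mem_image, Finset.coe_sort_coe, Finset.mem_coe,
        mem_nthRootsFinset (show 0 < k by omega) (1 : ℂ), Prod.mk.injEq]
      constructor
      · rintro ⟨hak, hb⟩; exact ⟨a, hak, rfl, hb.symm⟩
      · rintro ⟨x, hx, rfl, hb⟩; exact ⟨hx, hb.symm⟩
    rw [himg, Set.ncard_image_of_injective _ (fun x y h => by simpa using h),
      Set.ncard_coe_finset, hζ.card_nthRootsFinset]
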